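/- arXiv:1912.04533 — 3 statements merged into one kernel-verified Lean document; each statement's English description precedes it below -/
import Mathlib

section
/- If A and B are independent determinant preserving random d×d matrices, then A + B is determinant preserving. -/
open Matrix MeasureTheory ProbabilityTheory

/-- The product measurable space on matrices (matrices are functions). -/
instance matrixMeasurableSpace {m n α : Type*} [MeasurableSpace α] :
    MeasurableSpace (Matrix m n α) :=
  MeasurableSpace.pi (X := fun _ : m => n → α)

/-- A random `d × d` matrix is determinant preserving if expectation commutes with the
determinant on every square submatrix. -/
def DetPreserving {Ω : Type*} [MeasurableSpace Ω] (μ : Measure Ω) {d : ℕ}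
    (A : Ω → Matrix (Fin d) (Fin d) ℝ) : Prop :=
  ∀ (k : ℕ) (ρ σ : Fin k → Fin d), Function.Injective ρ → Function.Injective σ →
    (∫ ω, ((A ω).submatrix ρ σ).det ∂μ) =
      ((Matrix.of fun i j => ∫ ω, A ω i j ∂μ).submatrix ρ σ).det

private lemma measurable_entry {d : ℕ} (i j : Fin d) :
    Measurable fun a : Matrix (Fin d) (Fin d) ℝ => a i j := by
  have h : Measurable fun a : Fin d → Fin d → ℝ => a i j :=
    (measurable_pi_apply j).comp (measurable_pi_apply i)
  exact h

private lemma measurable_det_entries {α : Type*} [MeasurableSpace α] {k : ℕ}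
    (f : α → Matrix (Fin k) (Fin k) ℝ) (h : ∀ i j, Measurable fun x => f x i j) :
    Measurable fun x => (f x).det := by
  simp only [Matrix.det_apply']
  exact Finset.measurable_sum _ fun σ _ =>
    (Finset.measurable_prod _ fun i _ => h _ _).const_mul _

/-- Row-splitting identity for determinants of a sum of a submatrix and a shift. -/
private lemma det_row_split {d n : ℕ} (ρ σ : Fin (n + 1) → Fin d)
    (x : Matrix (Fin d) (Fin d) ℝ) (b : Matrix (Fin (n + 1)) (Fin (n + 1)) ℝ)
    (i : Fin (n + 1)) :
    (x.submatrix ρ σ + b).det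
      = (x.submatrix ρ σ + b.updateRow i 0).det
        + ∑ j : Fin (n + 1), (-1) ^ ((i : ℕ) + (j : ℕ)) * b i j *
            (x.submatrix (ρ ∘ i.succAbove) (σ ∘ j.succAbove)
              + b.submatrix i.succAbove j.succAbove).det := by
  have hrow : (x.submatrix ρ σ + b) i = (x.submatrix ρ σ) i + b i := rfl
  have h0 : (x.submatrix ρ σ + b).det
      = ((x.submatrix ρ σ + b).updateRow i ((x.submatrix ρ σ) i)).det
        + ((x.submatrix ρ σ + b).updateRow i (b i)).det := by
    conv_lhs => rw [← Matrix.updateRow_eq_self (x.submatrix ρ σ + b) i]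
    rw [hrow, Matrix.det_updateRow_add]
  rw [h0]
  congr 1
  · congr 1
    ext i' j'
    by_cases h : i' = i
    · subst h
      simp [Matrix.updateRow_self, Matrix.add_apply]
    · simp [Matrix.updateRow_ne h, Matrix.add_apply]
  · rw [Matrix.det_succ_row _ i]
    refine Finset.sum_congr rfl fun j _ => ?_
    have h1 : ((x.submatrix ρ σ + b).updateRow i (b i)) i j = b i j := by
      simp [Matrix.updateRow_self]
    have h2 : ((x.submatrix ρ σ + b).updateRow i (b i)).submatrix i.succAbove j.succAbove
        = x.submatrix (ρ ∘ i.succAbove) (σ ∘ j.succAbove)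
            + b.submatrix i.succAbove j.succAbove := by
      ext i' j'
      simp [Matrix.submatrix_apply, Matrix.updateRow_ne (Fin.succAbove_ne i i'),
        Matrix.add_apply, Function.comp]
    rw [h1, h2]

/-- Integrability of shifted minors propagates from the base shifts. -/
private lemma integrable_det_shift {d : ℕ} (ν : Measure (Matrix (Fin d) (Fin d) ℝ))
    [IsProbabilityMeasure ν] (c : Matrix (Fin d) (Fin d) ℝ)
    (K : ∀ (k : ℕ) (ρ σ : Fin k → Fin d), Function.Injective ρ → Function.Injective σ →
      Integrable (fun a => ((a + c).submatrix ρ σ).det) ν) :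
    ∀ (k : ℕ) (ρ σ : Fin k → Fin d), Function.Injective ρ → Function.Injective σ →
      ∀ b : Matrix (Fin k) (Fin k) ℝ,
      Integrable (fun a => ((a + c).submatrix ρ σ + b).det) ν := by
  intro k
  induction k using Nat.strong_induction_on with
  | _ k IH =>
  cases k with
  | zero =>
    intro ρ σ _ _ b
    have hdet : (fun a : Matrix (Fin d) (Fin d) ℝ => ((a + c).submatrix ρ σ + b).det)
        = fun _ => (1 : ℝ) := funext fun a => Matrix.det_fin_zero
    rw [hdet]
    exact integrable_const 1
  | succ n =>
    intro ρ σ hρ hσ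
    suffices h : ∀ S : Finset (Fin (n + 1)), ∀ b : Matrix (Fin (n + 1)) (Fin (n + 1)) ℝ,
        (∀ i, i ∉ S → b i = 0) →
        Integrable (fun a => ((a + c).submatrix ρ σ + b).det) ν by
      intro b
      exact h Finset.univ b fun i hi => absurd (Finset.mem_univ i) hi
    intro S
    induction S using Finset.induction_on with
    | empty =>
      intro b hb
      have hb0 : b = 0 := by
        ext i j
        exact congrFun (hb i (Finset.notMem_empty i)) j
      simp only [hb0, add_zero]
      exact K _ ρ σ hρ hσ
    | @insert i S' hiS ihS =>
      intro b hb
      have key : (fun a : Matrix (Fin d) (Fin d) ℝ => ((a + c).submatrix ρ σ + b).det)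
          = fun a => ((a + c).submatrix ρ σ + b.updateRow i 0).det
              + ∑ j : Fin (n + 1), (-1) ^ ((i : ℕ) + (j : ℕ)) * b i j *
                  ((a + c).submatrix (ρ ∘ i.succAbove) (σ ∘ j.succAbove)
                    + b.submatrix i.succAbove j.succAbove).det :=
        funext fun a => det_row_split ρ σ (a + c) b i
      rw [key]
      refine Integrable.add ?_ ?_
      · refine ihS (b.updateRow i 0) fun i' hi' => ?_
        by_cases h : i' = i
        · subst h; exact Matrix.updateRow_self
        · rw [Matrix.updateRow_ne h]
          refine hb i' fun hmem => ?_
          rcases Finset.mem_insert.mp hmem with h' | h'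
          · exact h h'
          · exact hi' h'
      · refine integrable_finset_sum _ fun j _ => ?_
        exact (IH n (Nat.lt_succ_self n) (ρ ∘ i.succAbove) (σ ∘ j.succAbove)
          (hρ.comp Fin.succAbove_right_injective) (hσ.comp Fin.succAbove_right_injective)
          (b.submatrix i.succAbove j.succAbove)).const_mul _

/-- The value of integrals of shifted minors, given determinant preservation and
integrability of all shifted minors. -/
private lemma integral_det_shift {d : ℕ} (ν : Measure (Matrix (Fin d) (Fin d) ℝ))
    [IsProbabilityMeasure ν] (E : Matrix (Fin d) (Fin d) ℝ)
    (H1 : ∀ (k : ℕ) (ρ σ : Fin k → Fin d), Function.Injective ρ → Function.Injective σ →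
      (∫ a, (a.submatrix ρ σ).det ∂ν) = (E.submatrix ρ σ).det)
    (H2 : ∀ (k : ℕ) (ρ σ : Fin k → Fin d), Function.Injective ρ → Function.Injective σ →
      ∀ b : Matrix (Fin k) (Fin k) ℝ, Integrable (fun a => (a.submatrix ρ σ + b).det) ν) :
    ∀ (k : ℕ) (ρ σ : Fin k → Fin d), Function.Injective ρ → Function.Injective σ →
      ∀ b : Matrix (Fin k) (Fin k) ℝ,
      (∫ a, (a.submatrix ρ σ + b).det ∂ν) = (E.submatrix ρ σ + b).det := by
  intro k
  induction k using Nat.strong_induction_on with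
  | _ k IH =>
  cases k with
  | zero =>
    intro ρ σ _ _ b
    have h1 : ∀ a : Matrix (Fin d) (Fin d) ℝ, (a.submatrix ρ σ + b).det = (1 : ℝ) :=
      fun a => Matrix.det_fin_zero
    have h2 : (E.submatrix ρ σ + b).det = (1 : ℝ) := Matrix.det_fin_zero
    simp only [h1, h2, integral_const, measure_univ, ENNReal.toReal_one, smul_eq_mul, one_mul, probReal_univ]
  | succ n =>
    intro ρ σ hρ hσ
    suffices h : ∀ S : Finset (Fin (n + 1)), ∀ b : Matrix (Fin (n + 1)) (Fin (n + 1)) ℝ,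
        (∀ i, i ∉ S → b i = 0) →
        (∫ a, (a.submatrix ρ σ + b).det ∂ν) = (E.submatrix ρ σ + b).det by
      intro b
      exact h Finset.univ b fun i hi => absurd (Finset.mem_univ i) hi
    intro S
    induction S using Finset.induction_on with
    | empty =>
      intro b hb
      have hb0 : b = 0 := by
        ext i j
        exact congrFun (hb i (Finset.notMem_empty i)) j
      simp only [hb0, add_zero]
      exact H1 _ ρ σ hρ hσ
    | @insert i S' hiS ihS =>
      intro b hb
      have key : (fun a : Matrix (Fin d) (Fin d) ℝ => (a.submatrix ρ σ + b).det)
          = fun a => (a.submatrix ρ σ + b.updateRow i 0).det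
              + ∑ j : Fin (n + 1), (-1) ^ ((i : ℕ) + (j : ℕ)) * b i j *
                  (a.submatrix (ρ ∘ i.succAbove) (σ ∘ j.succAbove)
                    + b.submatrix i.succAbove j.succAbove).det :=
        funext fun a => det_row_split ρ σ a b i
      have hsupp : ∀ i', i' ∉ S' → (b.updateRow i 0) i' = 0 := by
        intro i' hi'
        by_cases h : i' = i
        · subst h; exact Matrix.updateRow_self
        · rw [Matrix.updateRow_ne h]
          refine hb i' fun hmem => ?_
          rcases Finset.mem_insert.mp hmem with h' | h'
          · exact h h'
          · exact hi' h'
      have hint1 : Integrable (fun a : Matrix (Fin d) (Fin d) ℝ =>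
          (a.submatrix ρ σ + b.updateRow i 0).det) ν := H2 _ ρ σ hρ hσ _
      have hint2 : ∀ j : Fin (n + 1), Integrable (fun a : Matrix (Fin d) (Fin d) ℝ =>
          (-1) ^ ((i : ℕ) + (j : ℕ)) * b i j *
            (a.submatrix (ρ ∘ i.succAbove) (σ ∘ j.succAbove)
              + b.submatrix i.succAbove j.succAbove).det) ν := fun j =>
        (H2 n (ρ ∘ i.succAbove) (σ ∘ j.succAbove)
          (hρ.comp Fin.succAbove_right_injective) (hσ.comp Fin.succAbove_right_injective)
          _).const_mul _
      rw [key, integral_add hint1 (integrable_finset_sum _ fun j _ => hint2 j),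
        integral_finset_sum _ fun j _ => hint2 j, det_row_split ρ σ E b i]
      congr 1
      · exact ihS (b.updateRow i 0) hsupp
      · refine Finset.sum_congr rfl fun j _ => ?_
        rw [integral_const_mul, IH n (Nat.lt_succ_self n) (ρ ∘ i.succAbove) (σ ∘ j.succAbove)
          (hρ.comp Fin.succAbove_right_injective) (hσ.comp Fin.succAbove_right_injective)
          (b.submatrix i.succAbove j.succAbove)]

/-- If `A` and `B` are independent determinant preserving random matrices, then `A + B`
is determinant preserving. -/
theorem detPreserving_add {Ω : Type*} [MeasurableSpace Ω]
    (μ : Measure Ω) [IsProbabilityMeasure μ] {d : ℕ}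
    (A B : Ω → Matrix (Fin d) (Fin d) ℝ)
    (hMA : Measurable A) (hMB : Measurable B)
    (hInt : ∀ (k : ℕ) (ρ σ : Fin k → Fin d),
      Integrable (fun ω => ((A ω + B ω).submatrix ρ σ).det) μ)
    (hIndep : IndepFun A B μ)
    (hA : DetPreserving μ A) (hB : DetPreserving μ B) :
    DetPreserving μ (fun ω => A ω + B ω) := by
  classical
  set ν : Measure (Matrix (Fin d) (Fin d) ℝ) := Measure.map A μ with hν
  set ζ : Measure (Matrix (Fin d) (Fin d) ℝ) := Measure.map B μ with hζ
  haveI : IsProbabilityMeasure ν := Measure.isProbabilityMeasure_map hMA.aemeasurable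
  haveI : IsProbabilityMeasure ζ := Measure.isProbabilityMeasure_map hMB.aemeasurable
  set EA : (Matrix (Fin d) (Fin d) ℝ) := Matrix.of fun i j => ∫ ω, A ω i j ∂μ with hEA
  set EB : (Matrix (Fin d) (Fin d) ℝ) := Matrix.of fun i j => ∫ ω, B ω i j ∂μ with hEB
  -- basic measurability
  have hdetmeas : ∀ (k : ℕ) (ρ σ : Fin k → Fin d),
      Measurable fun a : (Matrix (Fin d) (Fin d) ℝ) => (a.submatrix ρ σ).det := fun k ρ σ =>
    measurable_det_entries _ fun i j => measurable_entry (ρ i) (σ j)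
  have hdetmeasP : ∀ (k : ℕ) (ρ σ : Fin k → Fin d),
      Measurable fun p : (Matrix (Fin d) (Fin d) ℝ) × (Matrix (Fin d) (Fin d) ℝ) => ((p.1 + p.2).submatrix ρ σ).det := fun k ρ σ =>
    measurable_det_entries _ fun i j =>
      (((measurable_entry (ρ i) (σ j)).comp measurable_fst).add
        ((measurable_entry (ρ i) (σ j)).comp measurable_snd))
  -- product measure
  have hprod : Measure.map (fun ω => (A ω, B ω)) μ = ν.prod ζ :=
    (indepFun_iff_map_prod_eq_prod_map_map hMA.aemeasurable hMB.aemeasurable).mp hIndep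
  have hIntP : ∀ (k : ℕ) (ρ σ : Fin k → Fin d),
      Integrable (fun p : (Matrix (Fin d) (Fin d) ℝ) × (Matrix (Fin d) (Fin d) ℝ) => ((p.1 + p.2).submatrix ρ σ).det) (ν.prod ζ) := by
    intro k ρ σ
    rw [← hprod]
    rw [integrable_map_measure (hdetmeasP k ρ σ).aestronglyMeasurable
      (hMA.prodMk hMB).aemeasurable]
    exact hInt k ρ σ
  -- choose b₀ and a₀ such that slice integrability holds for every minor
  have haeb : ∀ᵐ b ∂ζ, ∀ (k : ℕ) (ρ σ : Fin k → Fin d),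
      Integrable (fun a => ((a + b).submatrix ρ σ).det) ν := by
    rw [ae_all_iff]
    intro k
    rw [ae_all_iff]
    intro ρ
    rw [ae_all_iff]
    intro σ
    exact (hIntP k ρ σ).prod_left_ae
  have haea : ∀ᵐ a ∂ν, ∀ (k : ℕ) (ρ σ : Fin k → Fin d),
      Integrable (fun b => ((a + b).submatrix ρ σ).det) ζ := by
    rw [ae_all_iff]
    intro k
    rw [ae_all_iff]
    intro ρ
    rw [ae_all_iff]
    intro σ
    exact (hIntP k ρ σ).prod_right_ae
  obtain ⟨b₀, hb₀⟩ := haeb.exists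
  obtain ⟨a₀, ha₀⟩ := haea.exists
  -- integrability of all shifted minors for ν
  have H2ν : ∀ (k : ℕ) (ρ σ : Fin k → Fin d), Function.Injective ρ → Function.Injective σ →
      ∀ b : Matrix (Fin k) (Fin k) ℝ, Integrable (fun a => (a.submatrix ρ σ + b).det) ν := by
    intro k ρ σ hρ hσ b
    have h := integrable_det_shift ν b₀ (fun k ρ σ _ _ => hb₀ k ρ σ) k ρ σ hρ hσ
      (b - b₀.submatrix ρ σ)
    have heq : ∀ a : (Matrix (Fin d) (Fin d) ℝ), ((a + b₀).submatrix ρ σ + (b - b₀.submatrix ρ σ)).det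
        = (a.submatrix ρ σ + b).det := by
      intro a
      congr 1
      ext i' j'
      simp only [Matrix.submatrix_apply, Matrix.add_apply, Matrix.sub_apply]
      ring
    simpa only [heq] using h
  have H2ζ : ∀ (k : ℕ) (ρ σ : Fin k → Fin d), Function.Injective ρ → Function.Injective σ →
      ∀ b : Matrix (Fin k) (Fin k) ℝ, Integrable (fun x => (x.submatrix ρ σ + b).det) ζ := by
    intro k ρ σ hρ hσ b
    have hK : ∀ (k : ℕ) (ρ σ : Fin k → Fin d), Function.Injective ρ → Function.Injective σ →
        Integrable (fun x : (Matrix (Fin d) (Fin d) ℝ) => ((x + a₀).submatrix ρ σ).det) ζ := by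
      intro k ρ σ _ _
      have heq : ∀ x : (Matrix (Fin d) (Fin d) ℝ), ((a₀ + x).submatrix ρ σ).det = ((x + a₀).submatrix ρ σ).det := by
        intro x; rw [add_comm]
      simpa only [heq] using ha₀ k ρ σ
    have h := integrable_det_shift ζ a₀ hK k ρ σ hρ hσ (b - a₀.submatrix ρ σ)
    have heq : ∀ x : (Matrix (Fin d) (Fin d) ℝ), ((x + a₀).submatrix ρ σ + (b - a₀.submatrix ρ σ)).det
        = (x.submatrix ρ σ + b).det := by
      intro x
      congr 1
      ext i' j'
      simp only [Matrix.submatrix_apply, Matrix.add_apply, Matrix.sub_apply]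
      ring
    simpa only [heq] using h
  -- determinant preservation transported to ν and ζ
  have H1ν : ∀ (k : ℕ) (ρ σ : Fin k → Fin d), Function.Injective ρ → Function.Injective σ →
      (∫ a, (a.submatrix ρ σ).det ∂ν) = (EA.submatrix ρ σ).det := by
    intro k ρ σ hρ hσ
    rw [hν, integral_map hMA.aemeasurable (hdetmeas k ρ σ).aestronglyMeasurable]
    exact hA k ρ σ hρ hσ
  have H1ζ : ∀ (k : ℕ) (ρ σ : Fin k → Fin d), Function.Injective ρ → Function.Injective σ →
      (∫ x, (x.submatrix ρ σ).det ∂ζ) = (EB.submatrix ρ σ).det := by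
    intro k ρ σ hρ hσ
    rw [hζ, integral_map hMB.aemeasurable (hdetmeas k ρ σ).aestronglyMeasurable]
    exact hB k ρ σ hρ hσ
  have Gν := integral_det_shift ν EA H1ν H2ν
  have Gζ := integral_det_shift ζ EB H1ζ H2ζ
  -- integrability of entries
  have hIntA : ∀ i j : Fin d, Integrable (fun ω => A ω i j) μ := by
    intro i j
    have h := H2ν 1 ![i] ![j] (fun x y _ => Subsingleton.elim x y)
      (fun x y _ => Subsingleton.elim x y) 0
    have heq : ∀ a : (Matrix (Fin d) (Fin d) ℝ), (a.submatrix ![i] ![j] + (0 : Matrix (Fin 1) (Fin 1) ℝ)).det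
        = a i j := by
      intro a
      rw [add_zero, Matrix.det_fin_one]; rfl
    have h' : Integrable (fun a : (Matrix (Fin d) (Fin d) ℝ) => a i j) ν := by simpa only [heq] using h
    rw [hν, integrable_map_measure (measurable_entry i j).aestronglyMeasurable
      hMA.aemeasurable] at h'
    exact h'
  have hIntB : ∀ i j : Fin d, Integrable (fun ω => B ω i j) μ := by
    intro i j
    have h := H2ζ 1 ![i] ![j] (fun x y _ => Subsingleton.elim x y)
      (fun x y _ => Subsingleton.elim x y) 0
    have heq : ∀ a : (Matrix (Fin d) (Fin d) ℝ), (a.submatrix ![i] ![j] + (0 : Matrix (Fin 1) (Fin 1) ℝ)).det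
        = a i j := by
      intro a
      rw [add_zero, Matrix.det_fin_one]; rfl
    have h' : Integrable (fun a : (Matrix (Fin d) (Fin d) ℝ) => a i j) ζ := by simpa only [heq] using h
    rw [hζ, integrable_map_measure (measurable_entry i j).aestronglyMeasurable
      hMB.aemeasurable] at h'
    exact h'
  -- the expectation matrix of the sum
  have hsum : (Matrix.of fun i j => ∫ ω, (A ω + B ω) i j ∂μ) = EA + EB := by
    ext i j
    simp only [Matrix.of_apply, Matrix.add_apply, hEA, hEB]
    rw [integral_add (hIntA i j) (hIntB i j)]
  -- main computation
  intro k ρ σ hρ hσ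
  have hstep1 : (∫ ω, ((A ω + B ω).submatrix ρ σ).det ∂μ)
      = ∫ p : (Matrix (Fin d) (Fin d) ℝ) × (Matrix (Fin d) (Fin d) ℝ), ((p.1 + p.2).submatrix ρ σ).det ∂(ν.prod ζ) := by
    rw [← hprod, integral_map (hMA.prodMk hMB).aemeasurable
      (hdetmeasP k ρ σ).aestronglyMeasurable]
  have hstep2 : (∫ p : (Matrix (Fin d) (Fin d) ℝ) × (Matrix (Fin d) (Fin d) ℝ), ((p.1 + p.2).submatrix ρ σ).det ∂(ν.prod ζ))
      = ∫ a, ∫ b, ((a + b).submatrix ρ σ).det ∂ζ ∂ν :=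
    integral_prod _ (hIntP k ρ σ)
  have hinner : ∀ a : (Matrix (Fin d) (Fin d) ℝ), (∫ b, ((a + b).submatrix ρ σ).det ∂ζ)
      = (a.submatrix ρ σ + EB.submatrix ρ σ).det := by
    intro a
    have heq : ∀ b : (Matrix (Fin d) (Fin d) ℝ), ((a + b).submatrix ρ σ).det
        = (b.submatrix ρ σ + a.submatrix ρ σ).det := by
      intro b
      congr 1
      ext i' j'
      simp only [Matrix.submatrix_apply, Matrix.add_apply, Matrix.sub_apply]
      ring
    simp only [heq]
    rw [Gζ k ρ σ hρ hσ (a.submatrix ρ σ)]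
    rw [add_comm]
  have hmain : (∫ ω, ((A ω + B ω).submatrix ρ σ).det ∂μ)
      = (EA.submatrix ρ σ + EB.submatrix ρ σ).det := by
    rw [hstep1, hstep2]
    simp only [hinner]
    exact Gν k ρ σ hρ hσ (EB.submatrix ρ σ)
  have hRHS : ((Matrix.of fun i j => ∫ ω, (A ω + B ω) i j ∂μ).submatrix ρ σ).det
      = (EA.submatrix ρ σ + EB.submatrix ρ σ).det := by
    rw [hsum]
    rfl
  exact hmain.trans hRHS.symm
end

section
/- Let K be a Poisson random variable with mean γ, and conditionally on K, let A and B be K×d random matrices whose rows are an i.i.d. sequence of joint pairs of random vectors (with distribution not depending on K). Then E[det(AᵀB)] = det(E[AᵀB]), where E[AᵀB] = γ·E[a bᵀ] for (aᵀ, bᵀ) a single row pair. -/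
open Matrix MeasureTheory ProbabilityTheory

lemma det_sum_vecMulVec {d k : ℕ} (v w : ℕ → Fin d → ℝ) :
    (∑ i ∈ Finset.range k, vecMulVec (v i) (w i)).det
    = ∑ f ∈ Fintype.piFinset (fun _ : Fin d => Finset.range k),
        (∏ p, v (f p) p) * (Matrix.of fun p q => w (f p) q).det := by
  have h : (∑ i ∈ Finset.range k, vecMulVec (v i) (w i))
      = Matrix.of (fun p => ∑ i ∈ Finset.range k, v i p • w i) := by
    ext p q
    simp [Matrix.sum_apply, vecMulVec_apply, smul_eq_mul]
  rw [h]
  have h2 : (Matrix.of (fun p => ∑ i ∈ Finset.range k, v i p • w i)).det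
      = (Matrix.detRowAlternating (R := ℝ) (n := Fin d)).toMultilinearMap
          (fun p => ∑ i ∈ Finset.range k, v i p • w i) := rfl
  rw [h2, MultilinearMap.map_sum_finset]
  refine Finset.sum_congr rfl fun f hf => ?_
  have h3 : (Matrix.detRowAlternating (R := ℝ) (n := Fin d)).toMultilinearMap
      (fun p => v (f p) p • w (f p))
      = (∏ p, v (f p) p) • (Matrix.detRowAlternating (R := ℝ) (n := Fin d)).toMultilinearMap
          (fun p => w (f p)) := MultilinearMap.map_smul_univ _ _ _
  rw [h3, smul_eq_mul]
  rfl

lemma indep_prod_integral {Ω : Type*} [MeasurableSpace Ω] {μ : Measure Ω}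
    [IsProbabilityMeasure μ] {ι : Type*} (X : ι → Ω → ℝ)
    (hind : iIndepFun X μ)
    (hmeas : ∀ i, Measurable (X i)) (hint : ∀ i, Integrable (X i) μ) (s : Finset ι) :
    Integrable (fun ω => ∏ i ∈ s, X i ω) μ ∧
    (∫ ω, ∏ i ∈ s, X i ω ∂μ) = ∏ i ∈ s, ∫ ω, X i ω ∂μ := by
  classical
  induction s using Finset.induction with
  | empty => simp
  | insert a s hns ih =>
    have hindep : IndepFun (X a) (∏ j ∈ s, X j) μ :=
      (iIndepFun.indepFun_finset_prod_of_notMem hind hmeas hns).symm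
    have hprod : (∏ j ∈ s, X j) = fun ω => ∏ j ∈ s, X j ω := by
      ext ω; simp
    have hintP : Integrable (fun ω => ∏ j ∈ s, X j ω) μ := ih.1
    have hintP' : Integrable (∏ j ∈ s, X j) μ := by rw [hprod]; exact hintP
    have hmul : Integrable (fun ω => X a ω * ∏ j ∈ s, X j ω) μ := by
      have := hindep.integrable_mul (hint a) hintP'
      rw [hprod] at this
      exact this
    constructor
    · simpa [Finset.prod_insert hns] using hmul
    · rw [show (fun ω => ∏ i ∈ insert a s, X i ω) = fun ω => X a ω * ∏ j ∈ s, X j ω by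
        ext ω; rw [Finset.prod_insert hns]]
      have h2 := hindep.integral_mul_eq_mul_integral (hint a).aestronglyMeasurable hintP'.aestronglyMeasurable
      have h3 : (∫ ω, X a ω * ∏ j ∈ s, X j ω ∂μ) = (∫ ω, X a ω ∂μ) * ∫ ω, ∏ j ∈ s, X j ω ∂μ := by
        simpa [hprod] using h2
      rw [h3, ih.2, Finset.prod_insert hns]

lemma iIndepFun_precomp_inj {Ω : Type*} [MeasurableSpace Ω] {μ : Measure Ω}
    {β : Type*} {mβ : MeasurableSpace β} {ι κ : Type*} {f : ι → Ω → β}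
    (h : iIndepFun f μ) {u : κ → ι} (hu : Function.Injective u) :
    iIndepFun (fun k => f (u k)) μ := by
  classical
  rw [iIndepFun_iff_measure_inter_preimage_eq_mul] at h ⊢
  intro S sets hsets
  have key := h (S.image u)
    (sets := fun i => ⋂ j ∈ S.filter (fun j => u j = i), sets j)
    (fun i _ => Finset.measurableSet_biInter _
      (fun j hj => hsets j (Finset.mem_filter.mp hj).1))
  have hfilter : ∀ j ∈ S, S.filter (fun j' => u j' = u j) = {j} := by
    intro j hj
    ext j'
    simp only [Finset.mem_filter, Finset.mem_singleton]
    constructor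
    · rintro ⟨_, h2⟩; exact hu h2
    · rintro rfl; exact ⟨hj, rfl⟩
  have hInter : (⋂ i ∈ S.image u, f i ⁻¹' ⋂ j ∈ S.filter (fun j => u j = i), sets j)
      = ⋂ j ∈ S, f (u j) ⁻¹' sets j := by
    ext ω
    simp only [Set.mem_iInter, Set.mem_preimage, Finset.mem_image, Finset.mem_filter]
    constructor
    · intro H j hj
      exact H (u j) ⟨j, hj, rfl⟩ j ⟨hj, rfl⟩
    · rintro H i ⟨j, hj, rfl⟩ j' ⟨hj', hj''⟩
      rw [← hj'']
      exact H j' hj'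
  have hProd : (∏ i ∈ S.image u, μ (f i ⁻¹' ⋂ j ∈ S.filter (fun j => u j = i), sets j))
      = ∏ j ∈ S, μ (f (u j) ⁻¹' sets j) := by
    rw [Finset.prod_image (fun x hx y hy hxy => hu hxy)]
    refine Finset.prod_congr rfl fun j hj => ?_
    rw [hfilter j hj]
    simp
  rw [hInter, hProd] at key
  exact key

lemma card_piFinset_inj (d k : ℕ) [DecidablePred (Function.Injective : (Fin d → ℕ) → Prop)] :
    ((Fintype.piFinset fun _ : Fin d => Finset.range k).filter
      (fun f => Function.Injective f)).card = k.descFactorial d := by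
  classical
  have h := Fintype.card_embedding_eq (α := Fin d) (β := Fin k)
  simp only [Fintype.card_fin] at h
  rw [← h, ← Finset.card_univ]
  refine Finset.card_bij' (fun f hf => ⟨fun p => ⟨f p, by
      have := Finset.mem_filter.mp hf
      exact Finset.mem_range.mp (Fintype.mem_piFinset.mp this.1 p)⟩, fun p q hpq => by
      have := (Finset.mem_filter.mp hf).2
      exact this (by simpa [Fin.ext_iff] using congrArg Fin.val hpq)⟩)
    (fun e _ => fun p => (e p : ℕ)) ?_ ?_ ?_ ?_
  · intro f hf; exact Finset.mem_univ _
  · intro e _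
    refine Finset.mem_filter.mpr ⟨Fintype.mem_piFinset.mpr fun p => Finset.mem_range.mpr (e p).2, ?_⟩
    intro p q hpq
    exact e.injective (Fin.ext hpq)
  · intro f hf; rfl
  · intro e he
    ext p
    rfl

lemma term_integral {Ω : Type*} [MeasurableSpace Ω]
    (μ : Measure Ω) [IsProbabilityMeasure μ] {d : ℕ}
    (a b : ℕ → Ω → (Fin d → ℝ))
    (hMeas : ∀ i, Measurable (fun ω => (a i ω, b i ω)))
    (hIndep : iIndepFun (fun i ω => (a i ω, b i ω)) μ)
    (hIdent : ∀ i, IdentDistrib (fun ω => (a i ω, b i ω)) (fun ω => (a 0 ω, b 0 ω)) μ μ)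
    (hIntEntry : ∀ p q, Integrable (fun ω => a 0 ω p * b 0 ω q) μ)
    (f : Fin d → ℕ) (hf : Function.Injective f) :
    Integrable (fun ω => (∏ p, a (f p) ω p) * (Matrix.of fun p q => b (f p) ω q).det) μ ∧
    (∫ ω, (∏ p, a (f p) ω p) * (Matrix.of fun p q => b (f p) ω q).det ∂μ)
      = (Matrix.of fun p q => ∫ ω, a 0 ω p * b 0 ω q ∂μ).det := by
  classical
  have hpt : ∀ ω : Ω, (∏ p, a (f p) ω p) * (Matrix.of fun p q => b (f p) ω q).det
      = ∑ σ : Equiv.Perm (Fin d), (Equiv.Perm.sign σ : ℝ) *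
          ∏ i, (a (f (σ i)) ω (σ i) * b (f (σ i)) ω i) := by
    intro ω
    rw [Matrix.det_apply', Finset.mul_sum]
    refine Finset.sum_congr rfl fun σ _ => ?_
    have h1 : (∏ p, a (f p) ω p) = ∏ i, a (f (σ i)) ω (σ i) :=
      (Equiv.prod_comp σ (fun p => a (f p) ω p)).symm
    rw [h1]
    simp only [Matrix.of_apply]
    rw [Finset.prod_mul_distrib]
    ring
  -- the independent factors
  have key : ∀ σ : Equiv.Perm (Fin d),
      Integrable (fun ω => ∏ i, (a (f (σ i)) ω (σ i) * b (f (σ i)) ω i)) μ ∧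
      (∫ ω, ∏ i, (a (f (σ i)) ω (σ i) * b (f (σ i)) ω i) ∂μ)
        = ∏ i, ∫ ω, a 0 ω (σ i) * b 0 ω i ∂μ := by
    intro σ
    set X : Fin d → Ω → ℝ := fun i ω => a (f (σ i)) ω (σ i) * b (f (σ i)) ω i with hX
    have hg : ∀ i : Fin d, Measurable (fun y : (Fin d → ℝ) × (Fin d → ℝ) => y.1 (σ i) * y.2 i) :=
      fun i => ((measurable_pi_apply (σ i)).comp measurable_fst).mul
        ((measurable_pi_apply i).comp measurable_snd)
    have hXind : iIndepFun X μ := by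
      have h1 := iIndepFun_precomp_inj hIndep (hf.comp σ.injective)
      exact h1.comp (fun i y => y.1 (σ i) * y.2 i) hg
    have hXmeas : ∀ i, Measurable (X i) := fun i => (hg i).comp (hMeas (f (σ i)))
    have hXid : ∀ i : Fin d, IdentDistrib (X i) (fun ω => a 0 ω (σ i) * b 0 ω i) μ μ :=
      fun i => (hIdent (f (σ i))).comp (hg i)
    have hXint : ∀ i, Integrable (X i) μ :=
      fun i => (hXid i).integrable_iff.mpr (hIntEntry (σ i) i)
    obtain ⟨hI, hE⟩ := indep_prod_integral X hXind hXmeas hXint Finset.univ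
    refine ⟨hI, hE.trans ?_⟩
    exact Finset.prod_congr rfl fun i _ => (hXid i).integral_eq
  constructor
  · rw [show (fun ω => (∏ p, a (f p) ω p) * (Matrix.of fun p q => b (f p) ω q).det)
        = fun ω => ∑ σ : Equiv.Perm (Fin d), (Equiv.Perm.sign σ : ℝ) *
            ∏ i, (a (f (σ i)) ω (σ i) * b (f (σ i)) ω i) from funext hpt]
    exact integrable_finset_sum _ fun σ _ => ((key σ).1).const_mul _
  · rw [show (fun ω => (∏ p, a (f p) ω p) * (Matrix.of fun p q => b (f p) ω q).det)
        = fun ω => ∑ σ : Equiv.Perm (Fin d), (Equiv.Perm.sign σ : ℝ) *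
            ∏ i, (a (f (σ i)) ω (σ i) * b (f (σ i)) ω i) from funext hpt]
    rw [integral_finset_sum _ fun σ _ => ((key σ).1).const_mul _]
    rw [Matrix.det_apply']
    refine Finset.sum_congr rfl fun σ _ => ?_
    rw [integral_const_mul, (key σ).2]
    simp only [Matrix.of_apply]

lemma measurable_detG {d k : ℕ} :
    Measurable (fun y : ℕ → (Fin d → ℝ) × (Fin d → ℝ) =>
      (∑ i ∈ Finset.range k, vecMulVec (y i).1 (y i).2).det) := by
  have h : (fun y : ℕ → (Fin d → ℝ) × (Fin d → ℝ) =>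
        (∑ i ∈ Finset.range k, vecMulVec (y i).1 (y i).2).det)
      = fun y => ∑ σ : Equiv.Perm (Fin d), (Equiv.Perm.sign σ : ℝ) *
          ∏ i, ∑ j ∈ Finset.range k, (y j).1 (σ i) * (y j).2 i := by
    funext y
    rw [Matrix.det_apply']
    refine Finset.sum_congr rfl fun σ _ => ?_
    congr 1
    refine Finset.prod_congr rfl fun i _ => ?_
    simp [Matrix.sum_apply, vecMulVec_apply]
  rw [h]
  apply Finset.measurable_sum
  intro σ _
  apply Measurable.const_mul
  apply Finset.measurable_prod
  intro i _
  apply Finset.measurable_sum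
  intro j _
  exact Measurable.mul (f := fun y : ℕ → (Fin d → ℝ) × (Fin d → ℝ) => (y j).1 (σ i)) ((measurable_pi_apply (σ i)).comp ((measurable_pi_apply j).fst))
    ((measurable_pi_apply i).comp ((measurable_pi_apply j).snd))

lemma gk_integral {Ω : Type*} [MeasurableSpace Ω]
    (μ : Measure Ω) [IsProbabilityMeasure μ] {d : ℕ}
    (a b : ℕ → Ω → (Fin d → ℝ))
    (hMeas : ∀ i, Measurable (fun ω => (a i ω, b i ω)))
    (hIndep : iIndepFun (fun i ω => (a i ω, b i ω)) μ)
    (hIdent : ∀ i, IdentDistrib (fun ω => (a i ω, b i ω)) (fun ω => (a 0 ω, b 0 ω)) μ μ)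
    (hIntEntry : ∀ p q, Integrable (fun ω => a 0 ω p * b 0 ω q) μ)
    (k : ℕ) :
    Integrable (fun ω => (∑ i ∈ Finset.range k, vecMulVec (a i ω) (b i ω)).det) μ ∧
    (∫ ω, (∑ i ∈ Finset.range k, vecMulVec (a i ω) (b i ω)).det ∂μ)
      = (k.descFactorial d : ℝ) * (Matrix.of fun p q => ∫ ω, a 0 ω p * b 0 ω q ∂μ).det := by
  classical
  have hpt : ∀ ω : Ω, (∑ i ∈ Finset.range k, vecMulVec (a i ω) (b i ω)).det
      = ∑ f ∈ (Fintype.piFinset fun _ : Fin d => Finset.range k).filter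
          (fun f => Function.Injective f),
          (∏ p, a (f p) ω p) * (Matrix.of fun p q => b (f p) ω q).det := by
    intro ω
    rw [det_sum_vecMulVec (fun i => a i ω) (fun i => b i ω)]
    rw [Finset.sum_filter_of_ne]
    intro f _ hne
    by_contra hinj
    apply hne
    obtain ⟨p, q, hpq, hne'⟩ := Function.not_injective_iff.mp hinj
    have : (Matrix.of fun p q => b (f p) ω q).det = 0 := by
      apply Matrix.det_zero_of_row_eq hne'
      funext r
      simp [hpq]
    rw [this, mul_zero]
  have heq : (fun ω => (∑ i ∈ Finset.range k, vecMulVec (a i ω) (b i ω)).det)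
      = fun ω => ∑ f ∈ (Fintype.piFinset fun _ : Fin d => Finset.range k).filter
          (fun f => Function.Injective f),
          (∏ p, a (f p) ω p) * (Matrix.of fun p q => b (f p) ω q).det := funext hpt
  constructor
  · rw [heq]
    exact integrable_finset_sum _ fun f hf =>
      (term_integral μ a b hMeas hIndep hIdent hIntEntry f (Finset.mem_filter.mp hf).2).1
  · rw [heq, integral_finset_sum _ fun f hf =>
      (term_integral μ a b hMeas hIndep hIdent hIntEntry f (Finset.mem_filter.mp hf).2).1]
    rw [Finset.sum_congr rfl fun f hf =>
      (term_integral μ a b hMeas hIndep hIdent hIntEntry f (Finset.mem_filter.mp hf).2).2]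
    rw [Finset.sum_const, card_piFinset_inj d k, nsmul_eq_mul]

lemma poisson_desc_hasSum (γ : NNReal) (d : ℕ) :
    HasSum (fun k => poissonPMFReal γ k * (k.descFactorial d : ℝ)) ((γ : ℝ) ^ d) := by
  have hinj : Function.Injective (fun j : ℕ => j + d) := add_left_injective d
  rw [← Function.Injective.hasSum_iff hinj ?_]
  · have hexp : HasSum (fun j : ℕ => (γ : ℝ) ^ j / j.factorial) (Real.exp γ) := by
      rw [Real.exp_eq_exp_ℝ]
      exact NormedSpace.expSeries_div_hasSum_exp (γ : ℝ)
    have h2 := hexp.mul_left (Real.exp (-(γ : ℝ)) * (γ : ℝ) ^ d)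
    have h3 : Real.exp (-(γ : ℝ)) * (γ : ℝ) ^ d * Real.exp (γ : ℝ) = (γ : ℝ) ^ d := by
      rw [Real.exp_neg]
      field_simp
    rw [h3] at h2
    convert h2 using 2 with j
    · rfl
    simp only [Function.comp_apply, poissonPMFReal]
    have hfact : (j.factorial : ℝ) * ((j + d).descFactorial d : ℝ) = ((j + d).factorial : ℝ) := by
      have h := Nat.factorial_mul_descFactorial (Nat.le_add_left d j)
      rw [Nat.add_sub_cancel] at h
      rw [← Nat.cast_mul, h]
    have hjne : ((j + d).factorial : ℝ) ≠ 0 := Nat.cast_ne_zero.mpr (j + d).factorial_ne_zero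
    have hjne' : (j.factorial : ℝ) ≠ 0 := Nat.cast_ne_zero.mpr j.factorial_ne_zero
    field_simp
    rw [pow_add]
    linear_combination ((γ:ℝ)^j * (γ:ℝ)^d) * hfact
  · intro k hk
    have hkd : k < d := by
      by_contra h
      exact hk ⟨k - d, by simp only []; omega⟩
    rw [Nat.descFactorial_of_lt hkd]
    simp

/-- Let `K` be Poisson with mean `γ` and, independently of `K`, let `(a_i, b_i)` be an
i.i.d. sequence of pairs of random vectors in `ℝ^d`. With `AᵀB = ∑_{i < K} a_i b_iᵀ`
(the matrix built from the first `K` rows), we have `E[det(AᵀB)] = det(E[AᵀB])`, where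
`E[AᵀB] = γ · E[a bᵀ]` for a single row pair. -/
theorem expected_det_poisson_sum_rank_one {Ω : Type*} [MeasurableSpace Ω]
    (μ : Measure Ω) [IsProbabilityMeasure μ] {d : ℕ} (γ : NNReal) (hγ : 0 < γ)
    (K : Ω → ℕ) (hK : Measurable K)
    (hKpoisson : Measure.map K μ = (poissonPMF γ).toMeasure)
    (a b : ℕ → Ω → (Fin d → ℝ))
    (hMeas : ∀ i, Measurable (fun ω => (a i ω, b i ω)))
    (hIndep : iIndepFun (fun i ω => (a i ω, b i ω)) μ)
    (hIdent : ∀ i, IdentDistrib (fun ω => (a i ω, b i ω)) (fun ω => (a 0 ω, b 0 ω)) μ μ)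
    (hKindep : IndepFun K (fun ω => fun i : ℕ => (a i ω, b i ω)) μ)
    (hIntDet : Integrable
      (fun ω => (∑ i ∈ Finset.range (K ω), Matrix.vecMulVec (a i ω) (b i ω)).det) μ)
    (hIntEntry : ∀ p q, Integrable (fun ω => a 0 ω p * b 0 ω q) μ) :
    (∫ ω, (∑ i ∈ Finset.range (K ω), Matrix.vecMulVec (a i ω) (b i ω)).det ∂μ) =
      (Matrix.of fun p q => (γ : ℝ) * ∫ ω, a 0 ω p * b 0 ω q ∂μ).det := by
  classical
  set M' : Matrix (Fin d) (Fin d) ℝ := Matrix.of fun p q => ∫ ω, a 0 ω p * b 0 ω q ∂μ with hM'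
  set s : ℕ → Set Ω := fun k => K ⁻¹' {k} with hs
  have hsm : ∀ k, MeasurableSet (s k) := fun k => hK (measurableSet_singleton k)
  have hdisj : Pairwise (Function.onFun Disjoint s) := by
    intro i j hij
    refine Set.disjoint_left.mpr fun ω h1 h2 => hij ?_
    have e1 : K ω = i := h1
    have e2 : K ω = j := h2
    rw [← e1, e2]
  have hunion : (⋃ k, s k) = Set.univ := by
    ext ω
    simp only [Set.mem_iUnion, Set.mem_univ, iff_true]
    exact ⟨K ω, rfl⟩
  -- Step A: decompose the integral over the partition {K = k}
  have hA : (∫ ω, (∑ i ∈ Finset.range (K ω), vecMulVec (a i ω) (b i ω)).det ∂μ)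
      = ∑' k, ∫ ω in s k, (∑ i ∈ Finset.range (K ω), vecMulVec (a i ω) (b i ω)).det ∂μ := by
    rw [← setIntegral_univ, ← hunion]
    exact integral_iUnion hsm hdisj (hunion ▸ hIntDet.integrableOn)
  -- Step B + C: compute each piece
  have hC : ∀ k, (∫ ω in s k, (∑ i ∈ Finset.range (K ω), vecMulVec (a i ω) (b i ω)).det ∂μ)
      = poissonPMFReal γ k * ((k.descFactorial d : ℝ) * M'.det) := by
    intro k
    have hB : (∫ ω in s k, (∑ i ∈ Finset.range (K ω), vecMulVec (a i ω) (b i ω)).det ∂μ)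
        = ∫ ω in s k, (∑ i ∈ Finset.range k, vecMulVec (a i ω) (b i ω)).det ∂μ := by
      refine setIntegral_congr_fun (hsm k) fun ω hω => ?_
      have : K ω = k := hω
      rw [this]
    rw [hB]
    -- indicator trick
    have hindic : (∫ ω in s k, (∑ i ∈ Finset.range k, vecMulVec (a i ω) (b i ω)).det ∂μ)
        = ∫ ω, (Set.indicator {k} (fun _ => (1:ℝ)) (K ω)) *
            (∑ i ∈ Finset.range k, vecMulVec (a i ω) (b i ω)).det ∂μ := by
      rw [← integral_indicator (hsm k)]
      congr 1
      funext ω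
      by_cases h : K ω = k
      · simp [Set.indicator, hs, h]
      · simp [Set.indicator, hs, h]
    have hgk := gk_integral μ a b hMeas hIndep hIdent hIntEntry k
    have hIndepKg : IndepFun (fun ω => Set.indicator {k} (fun _ => (1:ℝ)) (K ω))
        (fun ω => (∑ i ∈ Finset.range k, vecMulVec (a i ω) (b i ω)).det) μ :=
      hKindep.comp ((measurable_const (a := (1:ℝ))).indicator (measurableSet_singleton k))
        measurable_detG
    have hint1 : Integrable (fun ω => Set.indicator {k} (fun _ => (1:ℝ)) (K ω)) μ := by
      have heq : (fun ω => Set.indicator {k} (fun _ => (1:ℝ)) (K ω))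
          = Set.indicator (s k) (fun _ => (1:ℝ)) := by
        funext ω
        by_cases h : K ω = k
        · simp [Set.indicator, hs, h]
        · simp [Set.indicator, hs, h]
      rw [heq]
      exact (integrable_const (1:ℝ)).indicator (hsm k)
    have h2 : (∫ ω, (Set.indicator {k} (fun _ => (1:ℝ)) (K ω)) *
          (∑ i ∈ Finset.range k, vecMulVec (a i ω) (b i ω)).det ∂μ)
        = (∫ ω, Set.indicator {k} (fun _ => (1:ℝ)) (K ω) ∂μ) *
          ∫ ω, (∑ i ∈ Finset.range k, vecMulVec (a i ω) (b i ω)).det ∂μ := by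
      simpa [Pi.mul_apply] using hIndepKg.integral_mul_eq_mul_integral hint1.aestronglyMeasurable hgk.1.aestronglyMeasurable
    rw [hindic, h2, hgk.2]
    have hμ : (∫ ω, Set.indicator {k} (fun _ => (1:ℝ)) (K ω) ∂μ) = poissonPMFReal γ k := by
      have heq : (fun ω => Set.indicator {k} (fun _ => (1:ℝ)) (K ω))
          = Set.indicator (s k) (fun _ => (1:ℝ)) := by
        funext ω
        by_cases h : K ω = k
        · simp [Set.indicator, hs, h]
        · simp [Set.indicator, hs, h]
      rw [heq, integral_indicator_const (1:ℝ) (hsm k), smul_eq_mul, mul_one]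
      have h1 : μ (s k) = Measure.map K μ {k} :=
        (Measure.map_apply hK (measurableSet_singleton k)).symm
      rw [measureReal_def, h1, hKpoisson, PMF.toMeasure_apply_singleton _ _ (measurableSet_singleton k)]
      show (ENNReal.ofReal (poissonPMFReal γ k)).toReal = _
      exact ENNReal.toReal_ofReal poissonPMFReal_nonneg
    rw [hμ]
  -- put it together
  rw [hA]
  have hsum : HasSum (fun k => poissonPMFReal γ k * ((k.descFactorial d : ℝ) * M'.det))
      (((γ : ℝ) ^ d) * M'.det) := by
    have h := (poisson_desc_hasSum γ d).mul_right M'.det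
    convert h using 2 with k
    · rfl
    ring
  have := hsum.tsum_eq
  calc (∑' k, ∫ ω in s k, (∑ i ∈ Finset.range (K ω), vecMulVec (a i ω) (b i ω)).det ∂μ)
      = ∑' k, poissonPMFReal γ k * ((k.descFactorial d : ℝ) * M'.det) := by
        exact tsum_congr hC
    _ = ((γ : ℝ) ^ d) * M'.det := this
    _ = (Matrix.of fun p q => (γ : ℝ) * ∫ ω, a 0 ω p * b 0 ω q ∂μ).det := by
        have : (Matrix.of fun p q => (γ : ℝ) * ∫ ω, a 0 ω p * b 0 ω q ∂μ)
            = (γ : ℝ) • M' := by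
          funext p q
          simp [hM', Matrix.smul_apply, smul_eq_mul]
        rw [this, Matrix.det_smul, Fintype.card_fin]
end

section
/- Let X be an n×d real matrix with n ≤ d such that X has rank n (so XXᵀ is invertible). Then det(XXᵀ)·tr((XᵀX)⁺) = Σ_{i=1}^n det(X_{−i} X_{−i}ᵀ), where X_{−i} is X with row i removed and (XᵀX)⁺ denotes the Moore–Penrose pseudoinverse. -/
open Matrix

/-- `P` is the Moore–Penrose pseudoinverse of `A` (the four Penrose conditions;
the pseudoinverse is the unique such matrix). -/
def IsMoorePenrose {m n : ℕ} (A : Matrix (Fin m) (Fin n) ℝ)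
    (P : Matrix (Fin n) (Fin m) ℝ) : Prop :=
  A * P * A = A ∧ P * A * P = P ∧ (A * P)ᵀ = A * P ∧ (P * A)ᵀ = P * A

/-- The Moore–Penrose pseudoinverse is unique. -/
theorem isMoorePenrose_unique {m n : ℕ} {A : Matrix (Fin m) (Fin n) ℝ}
    {P Q : Matrix (Fin n) (Fin m) ℝ}
    (hp : IsMoorePenrose A P) (hq : IsMoorePenrose A Q) : P = Q := by
  obtain ⟨hP1, hP2, hP3, hP4⟩ := hp
  obtain ⟨hQ1, hQ2, hQ3, hQ4⟩ := hq
  have h1 : A * P = A * Q := by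
    calc A * P = (A * P)ᵀ := hP3.symm
    _ = Pᵀ * (A * Q * A)ᵀ := by rw [transpose_mul, hQ1]
    _ = (A * P)ᵀ * (A * Q)ᵀ := by
        simp only [transpose_mul, Matrix.mul_assoc]
    _ = (A * P) * (A * Q) := by rw [hP3, hQ3]
    _ = (A * P * A) * Q := by simp only [Matrix.mul_assoc]
    _ = A * Q := by rw [hP1]
  have h2 : P * A = Q * A := by
    calc P * A = (P * A)ᵀ := hP4.symm
    _ = (A * Q * A)ᵀ * Pᵀ := by rw [transpose_mul, hQ1]
    _ = (Q * A)ᵀ * (P * A)ᵀ := by simp only [transpose_mul, Matrix.mul_assoc]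
    _ = (Q * A) * (P * A) := by rw [hP4, hQ4]
    _ = Q * (A * P * A) := by simp only [Matrix.mul_assoc]
    _ = Q * A := by rw [hP1]
  calc P = P * A * P := hP2.symm
  _ = P * (A * Q) := by rw [Matrix.mul_assoc, h1]
  _ = (Q * A) * Q := by rw [← Matrix.mul_assoc, h2]
  _ = Q := hQ2

/-- The diagonal entries of the adjugate are the principal minors. -/
theorem adjugate_diag_eq_minor {n : ℕ} (A : Matrix (Fin n) (Fin n) ℝ) (i : Fin n) :
    adjugate A i i =
      (A.submatrix (fun j : {j : Fin n // j ≠ i} => (j : Fin n))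
        (fun j : {j : Fin n // j ≠ i} => (j : Fin n))).det := by
  rw [adjugate_apply]
  set B := A.updateRow i (Pi.single i 1) with hB
  let e : Unit ⊕ {j : Fin n // j ≠ i} ≃ Fin n :=
    { toFun := Sum.elim (fun _ => i) (fun j => (j : Fin n))
      invFun := fun k => if h : k = i then Sum.inl () else Sum.inr ⟨k, h⟩
      left_inv := by
        rintro (⟨⟩ | ⟨j, hj⟩)
        · simp
        · simp [hj]
      right_inv := fun k => by
        by_cases h : k = i <;> simp [h] }
  rw [← det_submatrix_equiv_self e B]
  have hblock : B.submatrix e e =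
      fromBlocks 1 0
        (fun (j : {j : Fin n // j ≠ i}) (_ : Unit) => A (j : Fin n) i)
        (A.submatrix (fun j : {j : Fin n // j ≠ i} => (j : Fin n))
          (fun j : {j : Fin n // j ≠ i} => (j : Fin n))) := by
    ext x y
    cases x with
    | inl u =>
      cases y with
      | inl v => simp [e, hB, Pi.single_apply, fromBlocks]
      | inr j => simp [e, hB, Pi.single_apply, fromBlocks, (j.2 : (j : Fin n) ≠ i).symm]
    | inr j =>
      cases y with
      | inl v => simp [e, hB, fromBlocks, updateRow_apply, j.2]
      | inr k => simp [e, hB, fromBlocks, updateRow_apply, j.2]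
  rw [hblock]; refine (det_fromBlocks_zero₁₂ _ _ _).trans ?_
  simp

/-- For an `n × d` matrix `X` of full row rank `n ≤ d`,
`det(XXᵀ) · tr((XᵀX)⁺) = ∑ i, det(X_{−i} X_{−i}ᵀ)`, where `X_{−i}` is `X` with row `i`
removed. -/
theorem det_mul_trace_pinv_eq_sum_minors {n d : ℕ} (hnd : n ≤ d)
    (X : Matrix (Fin n) (Fin d) ℝ) (hrank : X.rank = n)
    (P : Matrix (Fin d) (Fin d) ℝ) (hP : IsMoorePenrose (Xᵀ * X) P) :
    (X * Xᵀ).det * P.trace =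
      ∑ i : Fin n,
        ((X.submatrix (fun j : {j : Fin n // j ≠ i} => (j : Fin n)) id) *
          (X.submatrix (fun j : {j : Fin n // j ≠ i} => (j : Fin n)) id)ᵀ).det := by
  set G : Matrix (Fin n) (Fin n) ℝ := X * Xᵀ with hG
  -- G is invertible
  have hGrank : G.rank = n := by rw [hG, rank_self_mul_transpose, hrank]
  have hGunit : IsUnit G := by
    rw [← Matrix.mulVec_surjective_iff_isUnit]
    have htop : LinearMap.range G.mulVecLin = ⊤ := by
      apply Submodule.eq_top_of_finrank_eq
      rw [← Matrix.rank, hGrank]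
      simp [Module.finrank_pi]
    intro y
    have := LinearMap.range_eq_top.mp htop y
    obtain ⟨x, hx⟩ := this
    exact ⟨x, hx⟩
  have hDet : IsUnit G.det := (Matrix.isUnit_iff_isUnit_det G).mp hGunit
  have hGG' : G * G⁻¹ = 1 := Matrix.mul_nonsing_inv G hDet
  have hG'G : G⁻¹ * G = 1 := Matrix.nonsing_inv_mul G hDet
  have hGsymm : Gᵀ = G := by rw [hG, transpose_mul, transpose_transpose]
  have hGinvsymm : (G⁻¹)ᵀ = G⁻¹ := by rw [Matrix.transpose_nonsing_inv, hGsymm]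
  -- the explicit pseudoinverse
  set Q : Matrix (Fin d) (Fin d) ℝ := Xᵀ * G⁻¹ * G⁻¹ * X with hQ
  set A : Matrix (Fin d) (Fin d) ℝ := Xᵀ * X with hA
  have hAQ : A * Q = Xᵀ * G⁻¹ * X := by
    calc A * Q = Xᵀ * (X * Xᵀ * (G⁻¹ * (G⁻¹ * X))) := by
          rw [hA, hQ]; simp only [Matrix.mul_assoc]
    _ = Xᵀ * (G * G⁻¹ * (G⁻¹ * X)) := by rw [← hG, ← Matrix.mul_assoc G]
    _ = Xᵀ * (G⁻¹ * X) := by rw [hGG', Matrix.one_mul]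
    _ = Xᵀ * G⁻¹ * X := by rw [Matrix.mul_assoc]
  have hQA : Q * A = Xᵀ * G⁻¹ * X := by
    calc Q * A = Xᵀ * (G⁻¹ * (G⁻¹ * (X * Xᵀ) * X)) := by
          rw [hA, hQ]; simp only [Matrix.mul_assoc]
    _ = Xᵀ * (G⁻¹ * (G⁻¹ * G * X)) := by rw [← hG]
    _ = Xᵀ * (G⁻¹ * X) := by rw [hG'G, Matrix.one_mul]
    _ = Xᵀ * G⁻¹ * X := by rw [Matrix.mul_assoc]
  have hQmp : IsMoorePenrose A Q := by
    refine ⟨?_, ?_, ?_, ?_⟩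
    · calc A * Q * A = Xᵀ * (G⁻¹ * (X * Xᵀ) * X) := by
            rw [hAQ, hA]; simp only [Matrix.mul_assoc]
      _ = Xᵀ * (G⁻¹ * G * X) := by rw [← hG]
      _ = Xᵀ * X := by rw [hG'G, Matrix.one_mul]
      _ = A := hA.symm
    · calc Q * A * Q = Xᵀ * (G⁻¹ * (X * Xᵀ) * (G⁻¹ * (G⁻¹ * X))) := by
            rw [hQA, hQ]; simp only [Matrix.mul_assoc]
      _ = Xᵀ * (G⁻¹ * G * (G⁻¹ * (G⁻¹ * X))) := by rw [← hG]
      _ = Xᵀ * (G⁻¹ * (G⁻¹ * X)) := by rw [hG'G, Matrix.one_mul]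
      _ = Q := by rw [hQ]; simp only [Matrix.mul_assoc]
    · rw [hAQ]
      calc (Xᵀ * G⁻¹ * X)ᵀ = Xᵀ * (G⁻¹)ᵀ * X := by
            simp only [transpose_mul, transpose_transpose, Matrix.mul_assoc]
      _ = Xᵀ * G⁻¹ * X := by rw [hGinvsymm]
    · rw [hQA]
      calc (Xᵀ * G⁻¹ * X)ᵀ = Xᵀ * (G⁻¹)ᵀ * X := by
            simp only [transpose_mul, transpose_transpose, Matrix.mul_assoc]
      _ = Xᵀ * G⁻¹ * X := by rw [hGinvsymm]
  have hPQ : P = Q := isMoorePenrose_unique hP hQmp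
  -- trace of Q is trace of G⁻¹
  have htr : Q.trace = (G⁻¹).trace := by
    calc Q.trace = (Xᵀ * (G⁻¹ * G⁻¹ * X)).trace := by
          rw [hQ]; simp only [Matrix.mul_assoc]
    _ = ((G⁻¹ * G⁻¹ * X) * Xᵀ).trace := Matrix.trace_mul_comm _ _
    _ = (G⁻¹ * (G⁻¹ * G)).trace := by simp only [Matrix.mul_assoc, ← hG]
    _ = (G⁻¹).trace := by rw [hG'G, Matrix.mul_one]
  rw [hPQ, htr]
  -- det G * trace G⁻¹ = trace (adjugate G)
  have hsmul : G.det • G⁻¹ = adjugate G := by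
    rw [Matrix.inv_def, smul_smul, Ring.mul_inverse_cancel _ hDet, one_smul]
  have : G.det * (G⁻¹).trace = (adjugate G).trace := by
    rw [← hsmul, Matrix.trace_smul, smul_eq_mul]
  rw [this, Matrix.trace]
  apply Finset.sum_congr rfl
  intro i _
  rw [Matrix.diag_apply, adjugate_diag_eq_minor]
  congr 1
end
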